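/- Let α, β ≥ 0, M > 0, and let (ε_{n,q})_{n,q ∈ ℕ₀} ⊆ [0,∞] satisfy ε_{n,q} ≤ α/M^{n+q} + β·Σ_{k=0}^{n-1} ε_{k,q+1}/M^{n-(k+1)} for all n, q ∈ ℕ₀. Then for all n, q ∈ ℕ₀ it holds that ε_{n,q} ≤ α(1+β)^n / M^{n+q} < ∞. -/

import Mathlib

open scoped ENNReal NNReal BigOperators

lemma gronwall_geo_sum (β : ℝ≥0∞) (n : ℕ) :
    1 + β * ∑ k ∈ Finset.range n, (1 + β) ^ k = (1 + β) ^ n := by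
  induction n with
  | zero => simp
  | succ n ih =>
    rw [Finset.sum_range_succ, mul_add, ← add_assoc, ih, pow_succ]
    ring

/-- Geometric two-parameter time-discrete Gronwall inequality. -/
theorem gronwall_geometric (α β : ℝ≥0) (M : ℝ) (hM : 0 < M) (ε : ℕ → ℕ → ℝ≥0∞)
    (h : ∀ n q : ℕ,
      ε n q ≤ (α : ℝ≥0∞) / ENNReal.ofReal M ^ (n + q)
        + (β : ℝ≥0∞) * ∑ k ∈ Finset.range n,
            ε k (q + 1) / ENNReal.ofReal M ^ (n - (k + 1))) :
    ∀ n q : ℕ,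
      ε n q ≤ (α : ℝ≥0∞) * (1 + (β : ℝ≥0∞)) ^ n / ENNReal.ofReal M ^ (n + q) ∧
      (α : ℝ≥0∞) * (1 + (β : ℝ≥0∞)) ^ n / ENNReal.ofReal M ^ (n + q) < ⊤ := by
  set m : ℝ≥0∞ := ENNReal.ofReal M with hm
  have hm0 : m ≠ 0 := (ENNReal.ofReal_pos.mpr hM).ne'
  have hmt : m ≠ ⊤ := ENNReal.ofReal_ne_top
  have hnum : ∀ n : ℕ, (α : ℝ≥0∞) * (1 + (β : ℝ≥0∞)) ^ n ≠ ⊤ := by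
    intro n
    exact ENNReal.mul_ne_top ENNReal.coe_ne_top
      (ENNReal.pow_ne_top (ENNReal.add_ne_top.mpr ⟨ENNReal.one_ne_top, ENNReal.coe_ne_top⟩))
  have key : ∀ n q : ℕ, ε n q ≤ (α : ℝ≥0∞) * (1 + (β : ℝ≥0∞)) ^ n / m ^ (n + q) := by
    intro n
    induction n using Nat.strong_induction_on with
    | _ n ih =>
      intro q
      have hsum : ∀ k ∈ Finset.range n,
          ε k (q + 1) / m ^ (n - (k + 1)) ≤
            (α : ℝ≥0∞) * (1 + (β : ℝ≥0∞)) ^ k / m ^ (n + q) := by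
        intro k hk
        have hk' := Finset.mem_range.mp hk
        have h1 : ε k (q + 1) / m ^ (n - (k + 1)) ≤
            ((α : ℝ≥0∞) * (1 + (β : ℝ≥0∞)) ^ k / m ^ (k + (q + 1))) / m ^ (n - (k + 1)) :=
          ENNReal.div_le_div_right (ih k hk' (q + 1)) _
        refine h1.trans (le_of_eq ?_)
        rw [div_eq_mul_inv, div_eq_mul_inv, div_eq_mul_inv, mul_assoc,
          ← ENNReal.mul_inv (Or.inl (pow_ne_zero _ hm0)) (Or.inl (ENNReal.pow_ne_top hmt)),
          ← pow_add]
        congr 3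
        omega
      calc ε n q ≤ (α : ℝ≥0∞) / m ^ (n + q)
            + (β : ℝ≥0∞) * ∑ k ∈ Finset.range n, ε k (q + 1) / m ^ (n - (k + 1)) := h n q
        _ ≤ (α : ℝ≥0∞) / m ^ (n + q)
            + (β : ℝ≥0∞) * ∑ k ∈ Finset.range n,
                (α : ℝ≥0∞) * (1 + (β : ℝ≥0∞)) ^ k / m ^ (n + q) :=
          add_le_add_right (mul_le_mul_right (Finset.sum_le_sum hsum) _) _
        _ = (α : ℝ≥0∞) * (1 + (β : ℝ≥0∞)) ^ n / m ^ (n + q) := by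
          rw [← gronwall_geo_sum (β : ℝ≥0∞) n]
          simp only [div_eq_mul_inv, ← Finset.sum_mul, ← Finset.mul_sum]
          ring
  intro n q
  exact ⟨key n q, ENNReal.div_lt_top (hnum n) (pow_ne_zero _ hm0)⟩
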